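/- Let k ≥ 1, m ≥ 2, let w* ∈ ℝ^m be nonzero, let 0 < λ < 1/2, and let w_0 ∈ ℝ^m be nonzero with 0 < θ_0 < π. Define the gradient descent sequence w_{t+1} = w_t − λ·G(w_t). Then for every t ≥ 0, ‖w_t‖ ≥ min{ ‖w_0‖·sin θ_0, ‖w*‖·sin² θ_0 / (α(k)·π), ‖w*‖/8 }. -/
import Mathlib


open scoped RealInnerProductSpace
open InnerProductGeometry Real Classical

/-- The ReLU function `σ(z) = max{z, 0}`. -/
noncomputable def relu (z : ℝ) : ℝ := max z 0

/-- `g u v = (1/(2π))·‖u‖·‖v‖·(sin θ_{u,v} + (π − θ_{u,v})·cos θ_{u,v})`. -/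
noncomputable def g {E : Type*} [NormedAddCommGroup E] [InnerProductSpace ℝ E]
    (u v : E) : ℝ :=
  (1 / (2 * π)) * ‖u‖ * ‖v‖ *
    (Real.sin (angle u v) + (π - angle u v) * Real.cos (angle u v))

/-- The no-overlap population loss
`ℓ(w) = (1/k²)·(γ‖w‖² − 2k·g(w,w*) − 2β‖w‖‖w*‖ + γ‖w*‖²)`,
where `β = (k²−k)/(2π)` and `γ = β + k/2`. -/
noncomputable def nol {m : ℕ} (k : ℕ) (ws : EuclideanSpace ℝ (Fin m))
    (w : EuclideanSpace ℝ (Fin m)) : ℝ :=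
  (1 / (k : ℝ) ^ 2) *
    (((((k : ℝ) ^ 2 - k) / (2 * π)) + (k : ℝ) / 2) * ‖w‖ ^ 2
      - 2 * (k : ℝ) * g w ws
      - 2 * (((k : ℝ) ^ 2 - k) / (2 * π)) * ‖w‖ * ‖ws‖
      + ((((k : ℝ) ^ 2 - k) / (2 * π)) + (k : ℝ) / 2) * ‖ws‖ ^ 2)

/-- The gradient of the no-overlap population loss: `G(0) = 0` and, for `w ≠ 0`,
`G(w) = (1/k²)·[(k + (k²−k)/π − (k‖w*‖ sin θ_{w,w*})/(π‖w‖) − ((k²−k)‖w*‖)/(π‖w‖))·w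
        − (k/π)·(π − θ_{w,w*})·w*]`. -/
noncomputable def nG {m : ℕ} (k : ℕ) (ws : EuclideanSpace ℝ (Fin m))
    (w : EuclideanSpace ℝ (Fin m)) : EuclideanSpace ℝ (Fin m) :=
  if w = 0 then 0 else
    (1 / (k : ℝ) ^ 2) •
      ((((k : ℝ) + ((k : ℝ) ^ 2 - k) / π
          - ((k : ℝ) * ‖ws‖ * Real.sin (angle w ws)) / (π * ‖w‖)
          - (((k : ℝ) ^ 2 - k) * ‖ws‖) / (π * ‖w‖)) • w)
        - (((k : ℝ) / π) * (π - angle w ws)) • ws)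

/-- `α(k) = 1/k + (k²−k)/(πk²)`. -/
noncomputable def alphac (k : ℕ) : ℝ := 1 / (k : ℝ) + ((k : ℝ) ^ 2 - k) / (π * (k : ℝ) ^ 2)

section Aux
variable {E : Type*} [NormedAddCommGroup E] [InnerProductSpace ℝ E]

lemma my_sin_angle_nonneg (u v : E) : 0 ≤ Real.sin (angle u v) :=
  Real.sin_nonneg_of_nonneg_of_le_pi (angle_nonneg u v) (angle_le_pi u v)

lemma my_norm_comb_sq (u v : E) (a b : ℝ) :
    ‖a • u + b • v‖ ^ 2 = a^2 * ‖u‖^2 + 2*a*b*⟪u,v⟫ + b^2 * ‖v‖^2 := by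
  rw [norm_add_sq_real, real_inner_smul_left, real_inner_smul_right, norm_smul, norm_smul]
  simp [mul_pow]
  ring

lemma my_norm_sin_comb (u v : E) (a b : ℝ) (ha : 0 ≤ a) (hv : v ≠ 0) :
    ‖a • u + b • v‖ * Real.sin (angle (a • u + b • v) v)
      = a * (‖u‖ * Real.sin (angle u v)) := by
  have hv' : (0:ℝ) < ‖v‖ := norm_pos_iff.2 hv
  have h1 := sin_angle_mul_norm_mul_norm (a • u + b • v) v
  have h2 := sin_angle_mul_norm_mul_norm u v
  have hiu : ⟪a • u + b • v, v⟫ = a * ⟪u,v⟫ + b * ⟪v,v⟫ := by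
    rw [inner_add_left, real_inner_smul_left, real_inner_smul_left]
  have hii : ⟪a • u + b • v, a • u + b • v⟫ = a^2*⟪u,u⟫ + 2*a*b*⟪u,v⟫ + b^2*⟪v,v⟫ := by
    rw [real_inner_self_eq_norm_sq, my_norm_comb_sq, real_inner_self_eq_norm_sq,
      real_inner_self_eq_norm_sq]
  have hrad : ⟪a • u + b • v, a • u + b • v⟫ * ⟪v,v⟫ - ⟪a • u + b • v, v⟫ * ⟪a • u + b • v, v⟫
      = a^2 * (⟪u,u⟫*⟪v,v⟫ - ⟪u,v⟫*⟪u,v⟫) := by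
    rw [hiu, hii]; have := real_inner_self_eq_norm_sq v; ring
  rw [hrad] at h1
  rw [Real.sqrt_mul (sq_nonneg a), Real.sqrt_sq ha, ← h2] at h1
  have h3 : ‖a • u + b • v‖ * Real.sin (angle (a • u + b • v) v) * ‖v‖
      = a * (‖u‖ * Real.sin (angle u v)) * ‖v‖ := by linear_combination h1
  exact mul_right_cancel₀ (ne_of_gt hv') h3

lemma my_cos_mono (u v : E) (hu : u ≠ 0) (hv : v ≠ 0) (a b : ℝ) (ha : 0 < a) (hb : 0 ≤ b)
    (hx : a • u + b • v ≠ 0) :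
    Real.cos (angle u v) ≤ Real.cos (angle (a • u + b • v) v) := by
  have hu' : (0:ℝ) < ‖u‖ := norm_pos_iff.2 hu
  have hv' : (0:ℝ) < ‖v‖ := norm_pos_iff.2 hv
  have hx' : (0:ℝ) < ‖a • u + b • v‖ := norm_pos_iff.2 hx
  rw [cos_angle, cos_angle, div_le_div_iff₀ (by positivity) (by positivity)]
  have hiu : ⟪a • u + b • v, v⟫ = a * ⟪u,v⟫ + b * (‖v‖*‖v‖) := by
    rw [inner_add_left, real_inner_smul_left, real_inner_smul_left,
      real_inner_self_eq_norm_mul_norm]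
  rw [hiu]
  have hcs : ⟪u,v⟫ ≤ ‖u‖ * ‖v‖ := real_inner_le_norm u v
  have hcs2 : -(‖u‖ * ‖v‖) ≤ ⟪u,v⟫ := neg_le_of_abs_le (abs_real_inner_le_norm u v)
  rcases le_or_gt 0 ⟪u,v⟫ with hc | hc
  · have htri : ‖a • u + b • v‖ ≤ a*‖u‖ + b*‖v‖ := by
      calc ‖a • u + b • v‖ ≤ ‖a • u‖ + ‖b • v‖ := norm_add_le _ _
      _ = a*‖u‖ + b*‖v‖ := by rw [norm_smul, norm_smul, Real.norm_of_nonneg ha.le,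
        Real.norm_of_nonneg hb]
    nlinarith [mul_le_mul_of_nonneg_right (mul_le_mul_of_nonneg_left htri hc) hv'.le,
      mul_le_mul_of_nonneg_left hcs (mul_nonneg (mul_nonneg hb hv'.le) hv'.le)]
  · have htri : a*‖u‖ - b*‖v‖ ≤ ‖a • u + b • v‖ := by
      have h4 : ‖a • u‖ ≤ ‖a • u + b • v‖ + ‖b • v‖ := by
        calc ‖a • u‖ = ‖(a • u + b • v) - b • v‖ := by rw [add_sub_cancel_right]
        _ ≤ ‖a • u + b • v‖ + ‖b • v‖ := norm_sub_le _ _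
      rw [norm_smul, norm_smul, Real.norm_of_nonneg ha.le, Real.norm_of_nonneg hb] at h4
      linarith
    nlinarith [mul_le_mul_of_nonneg_right (mul_le_mul_of_nonpos_left htri hc.le) hv'.le,
      mul_le_mul_of_nonneg_left hcs2 (mul_nonneg (mul_nonneg hb hv'.le) hv'.le)]

set_option maxHeartbeats 1000000 in
lemma main_step (ws u : E) (hws : ws ≠ 0) (hu : u ≠ 0)
    (K lam M m12 c0 s0 alpha : ℝ) (hK : 1 ≤ K) (hKint : K = 1 ∨ 2 ≤ K)
    (hlam0 : 0 < lam) (hlam1 : lam < 1/2)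
    (v : E)
    (hv : v = u - lam • ((1 / K ^ 2) •
      (((K + (K ^ 2 - K) / π
          - (K * ‖ws‖ * Real.sin (angle u ws)) / (π * ‖u‖)
          - ((K ^ 2 - K) * ‖ws‖) / (π * ‖u‖)) • u)
        - ((K / π) * (π - angle u ws)) • ws)))
    (halpha : alpha * (π * K) = π + K - 1)
    (hM0 : 0 < M) (hMm12 : M ≤ m12) (hM8 : M ≤ ‖ws‖ / 8)
    (hm12X : m12 ≤ ‖ws‖ * s0 ^ 2 / (alpha * π))
    (hc0s0 : c0 ^ 2 + s0 ^ 2 = 1)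
    (hnt : M ≤ ‖u‖) (hcos : c0 ≤ Real.cos (angle u ws))
    (hphase : Real.cos (angle u ws) < 0 → m12 ≤ ‖u‖ * Real.sin (angle u ws)) :
    (M ≤ ‖v‖ ∧ c0 ≤ Real.cos (angle v ws)) ∧
      (Real.cos (angle v ws) < 0 → m12 ≤ ‖v‖ * Real.sin (angle v ws)) := by
  have hπ : (0:ℝ) < π := Real.pi_pos
  have hπ3 : (3:ℝ) < π := Real.pi_gt_three
  have hπ315 : π < 3.15 := Real.pi_lt_d2
  have hK0 : (0:ℝ) < K := by linarith only [hK]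
  have hn0 : (0:ℝ) < ‖u‖ := norm_pos_iff.2 hu
  have hN : (0:ℝ) < ‖ws‖ := norm_pos_iff.2 hws
  have hS0 : 0 ≤ Real.sin (angle u ws) := my_sin_angle_nonneg u ws
  have hS1 : Real.sin (angle u ws) ≤ 1 := Real.sin_le_one _
  have hSC : Real.sin (angle u ws) ^ 2 + Real.cos (angle u ws) ^ 2 = 1 :=
    Real.sin_sq_add_cos_sq _
  have hθπ' : angle u ws ≤ π := angle_le_pi u ws
  have hθ0' : 0 ≤ angle u ws := angle_nonneg u ws
  have hα0 : 0 < alpha := by nlinarith only [halpha, mul_pos hπ hK0, hπ, hK]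
  have hα1 : alpha ≤ 1 := by nlinarith only [halpha, hπ3, hK, mul_pos hπ hK0]
  have hlα0 : 0 < lam * alpha := mul_pos hlam0 hα0
  have hlα : lam * alpha < 1/2 := by nlinarith only [hα1, hα0, hlam0, hlam1]
  have h2lα : (0:ℝ) ≤ 1 - lam * alpha := by linarith only [hlα]
  have halpha' : alpha = (π + K - 1) / (π * K) := by
    rw [eq_div_iff (ne_of_gt (mul_pos hπ hK0))]; exact halpha
  have hK2K : (0:ℝ) ≤ K ^ 2 - K := by nlinarith only [hK, hK0]
  obtain ⟨A, hAdef⟩ : ∃ A : ℝ, A = 1 - lam * ((1 / K ^ 2) * (K + (K ^ 2 - K) / π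
      - (K * ‖ws‖ * Real.sin (angle u ws)) / (π * ‖u‖)
      - ((K ^ 2 - K) * ‖ws‖) / (π * ‖u‖))) := ⟨_, rfl⟩
  obtain ⟨B, hBdef⟩ : ∃ B : ℝ, B = lam * ((1 / K ^ 2) * ((K / π) * (π - angle u ws))) :=
    ⟨_, rfl⟩
  have hv2 : v = A • u + B • ws := by
    rw [hv, hAdef, hBdef]; module
  have hAsplit : A = 1 - lam * alpha + lam * ((1 / K ^ 2) *
      ((K * ‖ws‖ * Real.sin (angle u ws)) / (π * ‖u‖)
        + ((K ^ 2 - K) * ‖ws‖) / (π * ‖u‖))) := by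
    rw [hAdef, halpha']; field_simp [hπ.ne', hK0.ne', hn0.ne']; try ring
  have hA_ge : 1 - lam * alpha ≤ A := by
    rw [hAsplit]
    have t1 : (0:ℝ) ≤ (K * ‖ws‖ * Real.sin (angle u ws)) / (π * ‖u‖) :=
      div_nonneg (mul_nonneg (mul_nonneg hK0.le hN.le) hS0) (mul_pos hπ hn0).le
    have t2 : (0:ℝ) ≤ ((K ^ 2 - K) * ‖ws‖) / (π * ‖u‖) :=
      div_nonneg (mul_nonneg hK2K hN.le) (mul_pos hπ hn0).le
    have t3 := mul_nonneg (mul_nonneg hlam0.le (by positivity : (0:ℝ) ≤ 1 / K ^ 2))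
      (add_nonneg t1 t2)
    linarith only [t3]
  have hA0 : (0:ℝ) < A := lt_of_lt_of_le (by linarith only [hlα]) hA_ge
  have hB0 : (0:ℝ) ≤ B := by
    rw [hBdef]
    exact mul_nonneg hlam0.le (mul_nonneg (by positivity)
      (mul_nonneg (div_nonneg hK0.le hπ.le) (by linarith only [hθπ'])))
  have hnormsq : ‖v‖ ^ 2 = A^2 * ‖u‖^2 + 2*A*B*⟪u,ws⟫ + B^2 * ‖ws‖^2 := by
    rw [hv2]; exact my_norm_comb_sq u ws A B
  have hinner : ⟪u,ws⟫ = Real.cos (angle u ws) * (‖u‖ * ‖ws‖) :=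
    (cos_angle_mul_norm_mul_norm u ws).symm
  have hsin1 : ‖v‖ * Real.sin (angle v ws) = A * (‖u‖ * Real.sin (angle u ws)) := by
    rw [hv2]; exact my_norm_sin_comb u ws A B hA0.le hws
  have hvs_le : ‖v‖ * Real.sin (angle v ws) ≤ ‖v‖ :=
    mul_le_of_le_one_right (norm_nonneg v) (Real.sin_le_one _)
  rcases lt_or_ge (Real.cos (angle u ws)) 0 with hc | hc
  · -- phase 1 : cos < 0
    have hsp := hphase hc
    have hSsq : s0 ^ 2 ≤ Real.sin (angle u ws) ^ 2 := by
      have hP := mul_nonneg (sub_nonneg.2 hcos)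
        (show (0:ℝ) ≤ -(c0 + Real.cos (angle u ws)) by linarith only [hcos, hc])
      nlinarith only [hSC, hc0s0, hP]
    have hAseq : A * (‖u‖ * Real.sin (angle u ws))
        = (1 - lam * alpha) * (‖u‖ * Real.sin (angle u ws))
          + lam * (‖ws‖ * ((Real.sin (angle u ws) + (K - 1)) * Real.sin (angle u ws))) / (π * K) := by
      rw [hAsplit]; field_simp [hπ.ne', hK0.ne', hn0.ne']; try ring
    have hscal : s0 ^ 2 * K ≤ (Real.sin (angle u ws) + (K - 1)) * Real.sin (angle u ws) := by
      nlinarith only [mul_le_mul_of_nonneg_right hSsq hK0.le,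
        mul_nonneg (mul_nonneg (sub_nonneg.2 hK) hS0) (sub_nonneg.2 hS1)]
    have e1 : lam * (‖ws‖ * s0 ^ 2) / π = lam * ‖ws‖ / (π * K) * (s0 ^ 2 * K) := by
      field_simp [hπ.ne', hK0.ne']; try ring
    have e2 : lam * (‖ws‖ * ((Real.sin (angle u ws) + (K - 1)) * Real.sin (angle u ws))) / (π * K)
        = lam * ‖ws‖ / (π * K) * ((Real.sin (angle u ws) + (K - 1)) * Real.sin (angle u ws)) := by
      ring
    have q5 : lam * (‖ws‖ * s0 ^ 2) / π
        ≤ lam * (‖ws‖ * ((Real.sin (angle u ws) + (K - 1)) * Real.sin (angle u ws))) / (π * K) := by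
      rw [e1, e2]
      exact mul_le_mul_of_nonneg_left hscal (by positivity)
    have q1 : (1 - lam * alpha) * m12 ≤ (1 - lam * alpha) * (‖u‖ * Real.sin (angle u ws)) :=
      mul_le_mul_of_nonneg_left hsp h2lα
    have q2 : lam * alpha * m12 ≤ lam * alpha * (‖ws‖ * s0 ^ 2 / (alpha * π)) :=
      mul_le_mul_of_nonneg_left hm12X hlα0.le
    have q3 : lam * alpha * (‖ws‖ * s0 ^ 2 / (alpha * π)) = lam * (‖ws‖ * s0 ^ 2) / π := by
      field_simp [hπ.ne', hα0.ne']; try ring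
    have hkey1 : m12 ≤ A * (‖u‖ * Real.sin (angle u ws)) := by
      linarith only [hAseq, q1, q2, q3, q5]
    have hvnorm : m12 ≤ ‖v‖ * Real.sin (angle v ws) := by rw [hsin1]; exact hkey1
    have hMv : M ≤ ‖v‖ := le_trans hMm12 (le_trans hvnorm hvs_le)
    have hv0 : v ≠ 0 := by
      intro h; rw [h, norm_zero] at hMv; linarith only [hMv, hM0]
    have hcosv : Real.cos (angle u ws) ≤ Real.cos (angle v ws) := by
      rw [hv2]; rw [hv2] at hv0; exact my_cos_mono u ws hu hws A B hA0 hB0 hv0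
    exact ⟨⟨hMv, le_trans hcos hcosv⟩, fun _ => hvnorm⟩
  · -- phase 2 : cos ≥ 0
    have hAn : A * ‖u‖ ≤ ‖v‖ := by
      have h1 : (A * ‖u‖) ^ 2 ≤ ‖v‖ ^ 2 := by
        rw [hnormsq, hinner]
        nlinarith only [mul_nonneg (mul_nonneg hA0.le hB0)
          (mul_nonneg hc (mul_nonneg hn0.le hN.le)), sq_nonneg (B * ‖ws‖)]
      nlinarith only [h1, norm_nonneg v, mul_nonneg hA0.le hn0.le]
    have hMv : M ≤ ‖v‖ := by
      rcases le_or_gt π (8 * Real.sin (angle u ws) + 7 * (K - 1)) with h2a | h2b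
      · -- 2a
        have hAn_eq : A * ‖u‖ = (1 - lam * alpha) * ‖u‖
            + lam * (‖ws‖ * (Real.sin (angle u ws) + (K - 1))) / (π * K) := by
          rw [hAsplit]; field_simp [hπ.ne', hK0.ne', hn0.ne']; try ring
        have hscal : π + K - 1 ≤ 8 * (Real.sin (angle u ws) + (K - 1)) := by
          linarith only [h2a]
        have e1 : lam * alpha * (‖ws‖ / 8) = lam * ‖ws‖ / (8 * (π * K)) * (π + K - 1) := by
          rw [halpha']; field_simp [hπ.ne', hK0.ne']; try ring
        have e2 : lam * (‖ws‖ * (Real.sin (angle u ws) + (K - 1))) / (π * K)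
            = lam * ‖ws‖ / (8 * (π * K)) * (8 * (Real.sin (angle u ws) + (K - 1))) := by
          field_simp [hπ.ne', hK0.ne']; try ring
        have hterm : lam * alpha * (‖ws‖ / 8)
            ≤ lam * (‖ws‖ * (Real.sin (angle u ws) + (K - 1))) / (π * K) := by
          rw [e1, e2]; exact mul_le_mul_of_nonneg_left hscal (by positivity)
        have hMA : M ≤ A * ‖u‖ := by
          linarith only [hAn_eq, hterm, mul_le_mul_of_nonneg_left hnt h2lα,
            mul_le_mul_of_nonneg_left hM8 hlα0.le]
        exact le_trans hMA hAn
      · -- 2b : necessarily K = 1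
        have hK1' : K = 1 := by
          rcases hKint with h | h
          · exact h
          · exfalso; linarith only [h, h2b, hS0, hπ315]
        have hα_1 : alpha = 1 := by
          have h := halpha
          rw [hK1'] at h
          apply mul_right_cancel₀ (ne_of_gt hπ)
          rw [one_mul]; linarith only [h]
        have hS8 : Real.sin (angle u ws) < π / 8 := by
          rw [hK1'] at h2b; linarith only [h2b]
        have hc9 : (9:ℝ)/10 ≤ Real.cos (angle u ws) := by
          nlinarith only [hSC, hc, hS0, mul_le_mul hS8.le hS8.le hS0 (by positivity),
            mul_lt_mul'' hπ315 hπ315 hπ.le hπ.le]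
        have hθhalf : angle u ws ≤ π / 2 := by
          by_contra h
          push_neg at h
          have hcc := Real.cos_neg_of_pi_div_two_lt_of_lt h (by linarith only [hθπ', hπ])
          linarith only [hcc, hc]
        have hB2 : lam / 2 ≤ B := by
          rw [hBdef, hK1']
          have e : lam * ((1 / (1:ℝ) ^ 2) * (((1:ℝ) / π) * (π - angle u ws)))
              = lam * (π - angle u ws) / π := by ring
          rw [e, le_div_iff₀ hπ]
          have := mul_nonneg hlam0.le
            (show (0:ℝ) ≤ π / 2 - angle u ws by linarith only [hθhalf])
          nlinarith only [this]
        set r := min (‖u‖) (‖ws‖ / 8) with hrdef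
        have hr0 : (0:ℝ) ≤ r := by
          rw [hrdef]; exact le_min hn0.le (by positivity)
        have hrn : r ≤ ‖u‖ := min_le_left _ _
        have hrN : 8 * r ≤ ‖ws‖ := by
          have h8 : r ≤ ‖ws‖ / 8 := min_le_right _ _
          linarith only [h8]
        have hMr : M ≤ r := le_min hnt hM8
        have hAlb : 1 - lam ≤ A := by
          have h := hA_ge; rw [hα_1, mul_one] at h; exact h
        have p1 : (1 - lam) * r ≤ A * ‖u‖ := mul_le_mul hAlb hrn hr0 hA0.le
        have p2 : lam / 2 * (8 * r) ≤ B * ‖ws‖ :=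
          mul_le_mul hB2 hrN (by positivity) hB0
        have p3 : ((1 - lam) * r) * (lam / 2 * (8 * r)) ≤ (A * ‖u‖) * (B * ‖ws‖) :=
          mul_le_mul p1 p2
            (mul_nonneg (by positivity) (by linarith only [hr0]))
            (mul_nonneg hA0.le hn0.le)
        have p1sq : ((1 - lam) * r) ^ 2 ≤ (A * ‖u‖) ^ 2 :=
          pow_le_pow_left₀ (mul_nonneg (by linarith only [hlam1]) hr0) p1 2
        have hsq : r ^ 2 ≤ ‖v‖ ^ 2 := by
          rw [hnormsq, hinner]
          nlinarith only [p1sq, p3, hc9,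
            mul_nonneg (mul_nonneg hA0.le hn0.le) (mul_nonneg hB0 hN.le),
            sq_nonneg (B * ‖ws‖),
            mul_nonneg (mul_nonneg (mul_nonneg hlam0.le
              (show (0:ℝ) ≤ 26/5 - 31/5 * lam by linarith only [hlam1])) hr0) hr0]
        have hrv : r ≤ ‖v‖ := by nlinarith only [hsq, norm_nonneg v, hr0]
        exact le_trans hMr hrv
    have hv0 : v ≠ 0 := by
      intro h; rw [h, norm_zero] at hMv; linarith only [hMv, hM0]
    have hcosv : Real.cos (angle u ws) ≤ Real.cos (angle v ws) := by
      rw [hv2]; rw [hv2] at hv0; exact my_cos_mono u ws hu hws A B hA0 hB0 hv0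
    exact ⟨⟨hMv, le_trans hcos hcosv⟩,
      fun hneg => absurd hneg (not_lt.2 (le_trans hc hcosv))⟩

end Aux

theorem stmt12 (k m : ℕ) (hk : 1 ≤ k) (hm : 2 ≤ m)
    (ws : EuclideanSpace ℝ (Fin m)) (hws : ws ≠ 0)
    (lam : ℝ) (hlam0 : 0 < lam) (hlam1 : lam < 1 / 2)
    (w : ℕ → EuclideanSpace ℝ (Fin m)) (hw0 : w 0 ≠ 0)
    (hθ0 : 0 < angle (w 0) ws) (hθπ : angle (w 0) ws < π)
    (hrec : ∀ t : ℕ, w (t + 1) = w t - lam • nG k ws (w t)) :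
    ∀ t : ℕ,
      min (min (‖w 0‖ * Real.sin (angle (w 0) ws))
          (‖ws‖ * Real.sin (angle (w 0) ws) ^ 2 / (alphac k * π)))
        (‖ws‖ / 8) ≤ ‖w t‖ := by
  have hπ : (0:ℝ) < π := Real.pi_pos
  have hK1 : (1:ℝ) ≤ (k:ℝ) := by exact_mod_cast hk
  have hK0 : (0:ℝ) < (k:ℝ) := by linarith only [hK1]
  have hN : (0:ℝ) < ‖ws‖ := norm_pos_iff.2 hws
  have hs0 : 0 < Real.sin (angle (w 0) ws) := Real.sin_pos_of_pos_of_lt_pi hθ0 hθπ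
  have hαval : alphac k * (π * (k:ℝ)) = π + (k:ℝ) - 1 := by
    rw [alphac]; field_simp [hπ.ne', hK0.ne']; try ring
  have hα0 : 0 < alphac k := by nlinarith only [hαval, mul_pos hπ hK0, hπ, hK1]
  have hKint : ((k:ℝ)) = 1 ∨ 2 ≤ ((k:ℝ)) := by
    rcases Nat.lt_or_ge k 2 with h | h
    · left
      have : k = 1 := by omega
      rw [this]; norm_num
    · right; exact_mod_cast h
  set m12 := min (‖w 0‖ * Real.sin (angle (w 0) ws))
      (‖ws‖ * Real.sin (angle (w 0) ws) ^ 2 / (alphac k * π)) with hm12def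
  set M := min m12 (‖ws‖ / 8) with hMdef
  have hm12a : m12 ≤ ‖w 0‖ * Real.sin (angle (w 0) ws) := by
    rw [hm12def]; exact min_le_left _ _
  have hm12b : m12 ≤ ‖ws‖ * Real.sin (angle (w 0) ws) ^ 2 / (alphac k * π) := by
    rw [hm12def]; exact min_le_right _ _
  have hMa : M ≤ m12 := by rw [hMdef]; exact min_le_left _ _
  have hM8 : M ≤ ‖ws‖ / 8 := by rw [hMdef]; exact min_le_right _ _
  have hM0 : 0 < M := by
    rw [hMdef, hm12def]
    exact lt_min (lt_min (mul_pos (norm_pos_iff.2 hw0) hs0)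
      (div_pos (mul_pos hN (pow_pos hs0 2)) (mul_pos hα0 hπ))) (by positivity)
  have key : ∀ t : ℕ,
      (M ≤ ‖w t‖ ∧ Real.cos (angle (w 0) ws) ≤ Real.cos (angle (w t) ws)) ∧
        (Real.cos (angle (w t) ws) < 0 →
          m12 ≤ ‖w t‖ * Real.sin (angle (w t) ws)) := by
    intro t
    induction t with
    | zero =>
      refine ⟨⟨?_, le_refl _⟩, fun _ => hm12a⟩
      have h1 : ‖w 0‖ * Real.sin (angle (w 0) ws) ≤ ‖w 0‖ :=
        mul_le_of_le_one_right (norm_nonneg _) (Real.sin_le_one _)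
      linarith only [hMa, hm12a, h1]
    | succ t ih =>
      obtain ⟨⟨hnt, hcos⟩, hphase⟩ := ih
      have hwt : w t ≠ 0 := by
        intro h; rw [h, norm_zero] at hnt; linarith only [hnt, hM0]
      have hv : w (t+1) = w t - lam • ((1 / (k:ℝ) ^ 2) •
          ((((k:ℝ) + ((k:ℝ) ^ 2 - (k:ℝ)) / π
              - ((k:ℝ) * ‖ws‖ * Real.sin (angle (w t) ws)) / (π * ‖w t‖)
              - (((k:ℝ) ^ 2 - (k:ℝ)) * ‖ws‖) / (π * ‖w t‖)) • w t)
            - (((k:ℝ) / π) * (π - angle (w t) ws)) • ws)) := by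
        rw [hrec t, nG, if_neg hwt]
      exact main_step ws (w t) hws hwt (k:ℝ) lam M m12
        (Real.cos (angle (w 0) ws)) (Real.sin (angle (w 0) ws)) (alphac k)
        hK1 hKint hlam0 hlam1 (w (t+1)) hv hαval hM0 hMa hM8 hm12b
        (Real.cos_sq_add_sin_sq _) hnt hcos hphase
  exact fun t => (key t).1.1
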